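/- arXiv:1407.0936 — 2 statements merged into one kernel-verified Lean document; each statement's English description precedes it below -/
import Mathlib

section
/- Let ρ ∈ (0,1), k ≥ 1, and μ ∈ ℝ^k with max{μ_1, …, μ_k} > 0. Let X ~ N(μ, Σ) with Σ_{ij} = ρ + (1−ρ)δ_{ij} and X* = max{X_1, …, X_k}. Then F_{X*}(x) < Φ(x) for every x ∈ ℝ; in particular F_{X*} and Φ do not intersect. -/
open MeasureTheory ProbabilityTheory Filter
open scoped ENNReal

/-- The standard normal cumulative distribution function `Φ`. -/
noncomputable def Phi (x : ℝ) : ℝ := ((gaussianReal 0 1) (Set.Iic x)).toReal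

/-- The standard normal probability density function `φ`. -/
noncomputable def phiPDF (x : ℝ) : ℝ := gaussianPDFReal 0 1 x

/-- The joint law of `n` independent standard normal random variables. -/
noncomputable def stdGaussianPi (n : ℕ) : Measure (Fin n → ℝ) :=
  Measure.pi fun _ => gaussianReal 0 1

/-- The intraclass-correlation multivariate Gaussian vector `X ~ N(μ, Σ)` with
`Σ_{ij} = ρ + (1-ρ)δ_{ij}`, realized as `X_i = μ_i + √ρ Y_0 + √(1-ρ) Y_i` where
`Y_0, …, Y_k` are independent standard normals (the coordinates of `ω`). -/
noncomputable def Xvec (ρ : ℝ) {k : ℕ} (μ : Fin k → ℝ) (i : Fin k) (ω : Fin (k+1) → ℝ) : ℝ :=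
  μ i + Real.sqrt ρ * ω 0 + Real.sqrt (1-ρ) * ω i.succ

/-- The cumulative distribution function of `X* = max {X_1, …, X_k}`. -/
noncomputable def Fstar (ρ : ℝ) {k : ℕ} (μ : Fin k → ℝ) (x : ℝ) : ℝ :=
  (stdGaussianPi (k+1) {ω | (⨆ i, Xvec ρ μ i ω) ≤ x}).toReal

/-- The planar rotation `(x, y) ↦ (a x + b y, -b x + a y)` as a linear map. -/
noncomputable def rotL (a b : ℝ) : (ℝ × ℝ) →ₗ[ℝ] (ℝ × ℝ) where
  toFun p := (a * p.1 + b * p.2, -b * p.1 + a * p.2)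
  map_add' p q := by simp; constructor <;> ring
  map_smul' c p := by simp; constructor <;> ring

lemma rotL_det (a b : ℝ) : LinearMap.det (rotL a b) = a^2 + b^2 := by
  rw [← LinearMap.det_toMatrix (Module.Basis.finTwoProd ℝ), Matrix.det_fin_two]
  simp [LinearMap.toMatrix_apply, rotL, Module.Basis.finTwoProd]
  ring

lemma rotL_map_volume {a b : ℝ} (hab : a^2 + b^2 = 1) :
    Measure.map (rotL a b) (volume : Measure (ℝ × ℝ)) = volume := by
  rw [Measure.map_linearMap_addHaar_eq_smul_addHaar _ (by rw [rotL_det]; rw [hab]; norm_num)]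
  simp [rotL_det, hab]

/-- The bivariate standard Gaussian as a density against planar Lebesgue measure. -/
lemma gauss_prod_eq : (gaussianReal 0 1).prod (gaussianReal 0 1)
    = (volume : Measure (ℝ × ℝ)).withDensity
        (fun p => gaussianPDF 0 1 p.1 * gaussianPDF 0 1 p.2) := by
  refine Measure.prod_eq fun s t hs ht => ?_
  rw [Measure.volume_eq_prod, withDensity_apply _ (hs.prod ht), ← Measure.prod_restrict,
    lintegral_prod_mul ((measurable_gaussianPDF 0 1).aemeasurable)
      ((measurable_gaussianPDF 0 1).aemeasurable),
    gaussianReal_apply 0 one_ne_zero s, gaussianReal_apply 0 one_ne_zero t]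

lemma pdf_rot {a b : ℝ} (hab : a^2 + b^2 = 1) (x y : ℝ) :
    gaussianPDFReal 0 1 (a*x + b*y) * gaussianPDFReal 0 1 (-b*x + a*y)
      = gaussianPDFReal 0 1 x * gaussianPDFReal 0 1 y := by
  simp only [gaussianPDFReal, NNReal.coe_one, mul_one, sub_zero]
  rw [mul_mul_mul_comm, ← Real.exp_add, mul_mul_mul_comm, ← Real.exp_add]
  congr 1
  rw [Real.exp_eq_exp]
  linear_combination (-(x^2 + y^2)/2) * hab

/-- Rotation invariance: if `a² + b² = 1` then `a X + b Y` is standard normal for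
independent standard normal `X`, `Y`. -/
lemma gauss_prod_halfplane {a b : ℝ} (hab : a^2 + b^2 = 1) (t : ℝ) :
    (gaussianReal 0 1).prod (gaussianReal 0 1) {p : ℝ × ℝ | a * p.1 + b * p.2 ≤ t}
      = gaussianReal 0 1 (Set.Iic t) := by
  have hLcont : Continuous (rotL a b) := (rotL a b).continuous_of_finiteDimensional
  have hSmeas : MeasurableSet {p : ℝ × ℝ | a * p.1 + b * p.2 ≤ t} :=
    measurableSet_le (by fun_prop) measurable_const
  have hAmeas : MeasurableSet {p : ℝ × ℝ | p.1 ≤ t} :=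
    measurableSet_le (by fun_prop) measurable_const
  have hD : Measurable (fun p : ℝ × ℝ => gaussianPDF 0 1 p.1 * gaussianPDF 0 1 p.2) :=
    ((measurable_gaussianPDF 0 1).comp measurable_fst).mul
      ((measurable_gaussianPDF 0 1).comp measurable_snd)
  have hpre : {p : ℝ × ℝ | a * p.1 + b * p.2 ≤ t} = rotL a b ⁻¹' {p : ℝ × ℝ | p.1 ≤ t} := by
    ext p; simp [rotL]
  have hinv : ∀ p : ℝ × ℝ,
      (fun p : ℝ × ℝ => gaussianPDF 0 1 p.1 * gaussianPDF 0 1 p.2) (rotL a b p)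
      = gaussianPDF 0 1 p.1 * gaussianPDF 0 1 p.2 := by
    intro p
    simp only [rotL, LinearMap.coe_mk, AddHom.coe_mk, gaussianPDF]
    rw [← ENNReal.ofReal_mul (gaussianPDFReal_nonneg _ _ _),
      ← ENNReal.ofReal_mul (gaussianPDFReal_nonneg _ _ _), pdf_rot hab]
  calc (gaussianReal 0 1).prod (gaussianReal 0 1) {p : ℝ × ℝ | a * p.1 + b * p.2 ≤ t}
      = ∫⁻ p in {p : ℝ × ℝ | a * p.1 + b * p.2 ≤ t},
          gaussianPDF 0 1 p.1 * gaussianPDF 0 1 p.2 ∂volume := by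
        rw [gauss_prod_eq, withDensity_apply _ hSmeas]
    _ = ∫⁻ p in rotL a b ⁻¹' {p : ℝ × ℝ | p.1 ≤ t},
          (fun p : ℝ × ℝ => gaussianPDF 0 1 p.1 * gaussianPDF 0 1 p.2) (rotL a b p) ∂volume := by
        rw [hpre]; exact setLIntegral_congr_fun (hLcont.measurable hAmeas)
          (fun p _ => (hinv p).symm)
    _ = ∫⁻ p in {p : ℝ × ℝ | p.1 ≤ t},
          gaussianPDF 0 1 p.1 * gaussianPDF 0 1 p.2 ∂(Measure.map (rotL a b) volume) := by
        rw [setLIntegral_map hAmeas hD hLcont.measurable]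
    _ = ∫⁻ p in {p : ℝ × ℝ | p.1 ≤ t},
          gaussianPDF 0 1 p.1 * gaussianPDF 0 1 p.2 ∂volume := by
        rw [rotL_map_volume hab]
    _ = (gaussianReal 0 1).prod (gaussianReal 0 1) {p : ℝ × ℝ | p.1 ≤ t} := by
        rw [gauss_prod_eq, withDensity_apply _ hAmeas]
    _ = gaussianReal 0 1 (Set.Iic t) := by
        have : {p : ℝ × ℝ | p.1 ≤ t} = Set.Iic t ×ˢ Set.univ := by ext p; simp
        rw [this, Measure.prod_prod, measure_univ, mul_one]

/-- The joint law of two distinct coordinates of an i.i.d. standard Gaussian vector. -/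
lemma pair_law {n : ℕ} {i j : Fin n} (hij : i ≠ j) :
    Measure.map (fun ω : Fin n → ℝ => (ω i, ω j)) (Measure.pi fun _ => gaussianReal 0 1)
      = (gaussianReal 0 1).prod (gaussianReal 0 1) := by
  have hf : Measurable (fun ω : Fin n → ℝ => (ω i, ω j)) :=
    (measurable_pi_apply i).prodMk (measurable_pi_apply j)
  symm
  refine Measure.prod_eq fun s t hs ht => ?_
  rw [Measure.map_apply hf (hs.prod ht)]
  classical
  have hpre : (fun ω : Fin n → ℝ => (ω i, ω j)) ⁻¹' (s ×ˢ t)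
      = Set.pi Set.univ (fun l => if l = i then s else if l = j then t else Set.univ) := by
    ext ω
    simp only [Set.mem_preimage, Set.mem_prod, Set.mem_pi, Set.mem_univ, forall_true_left]
    constructor
    · rintro ⟨h1, h2⟩ l
      by_cases hli : l = i
      · subst hli; simpa using h1
      · by_cases hlj : l = j
        · subst hlj; simp [hli, h2]
        · simp [hli, hlj]
    · intro h
      refine ⟨by simpa [hij] using h i, by simpa [(hij.symm : j ≠ i)] using h j⟩
  rw [hpre, Measure.pi_pi]
  have hval : ∀ l : Fin n, (gaussianReal 0 1) (if l = i then s else if l = j then t else Set.univ)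
      = (if l = i then gaussianReal 0 1 s else 1) * (if l = j then gaussianReal 0 1 t else 1) := by
    intro l
    by_cases hli : l = i
    · subst hli; simp [hij]
    · by_cases hlj : l = j
      · subst hlj; simp [hli]
      · simp [hli, hlj]
  simp_rw [hval]
  rw [Finset.prod_mul_distrib, Finset.prod_ite_eq' Finset.univ i (fun _ => gaussianReal 0 1 s),
    Finset.prod_ite_eq' Finset.univ j (fun _ => gaussianReal 0 1 t)]
  simp

lemma Phi_strictMono {u v : ℝ} (h : u < v) : Phi u < Phi v := by
  have hunion : Set.Iic u ∪ Set.Ioc u v = Set.Iic v := Set.Iic_union_Ioc_eq_Iic h.le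
  have hsum : gaussianReal 0 1 (Set.Iic v)
      = gaussianReal 0 1 (Set.Iic u) + gaussianReal 0 1 (Set.Ioc u v) := by
    rw [← hunion, measure_union (Set.Iic_disjoint_Ioc le_rfl) measurableSet_Ioc]
  have hpos : 0 < gaussianReal 0 1 (Set.Ioc u v) := by
    rw [pos_iff_ne_zero]
    intro h0
    have hv := gaussianReal_absolutelyContinuous' 0 one_ne_zero h0
    rw [Real.volume_Ioc] at hv
    exact absurd hv (by simp [ENNReal.ofReal_eq_zero]; linarith)
  have hlt : gaussianReal 0 1 (Set.Iic u) < gaussianReal 0 1 (Set.Iic v) := by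
    rw [hsum]
    exact ENNReal.lt_add_right (measure_ne_top _ _) hpos.ne'
  exact (ENNReal.toReal_lt_toReal (measure_ne_top _ _) (measure_ne_top _ _)).mpr hlt

/-- If `max {μ_1, …, μ_k} > 0` then `F_{X*}(x) < Φ(x)` for every `x`; in particular
`F_{X*}` and `Φ` do not intersect. -/
theorem stmt5 (k : ℕ) (hk : 1 ≤ k) (ρ : ℝ) (hρ : ρ ∈ Set.Ioo (0:ℝ) 1)
    (μ : Fin k → ℝ) (hμ : 0 < ⨆ i, μ i) :
    (∀ x : ℝ, Fstar ρ μ x < Phi x) ∧ ¬ ∃ x : ℝ, Fstar ρ μ x = Phi x := by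
  haveI : Nonempty (Fin k) := ⟨⟨0, hk⟩⟩
  obtain ⟨i₀, hi₀⟩ := exists_eq_ciSup_of_finite (f := μ)
  have hμ0 : 0 < μ i₀ := by rw [hi₀]; exact hμ
  set a : ℝ := Real.sqrt ρ with ha
  set b : ℝ := Real.sqrt (1 - ρ) with hb
  have hab : a^2 + b^2 = 1 := by
    rw [ha, hb, Real.sq_sqrt hρ.1.le, Real.sq_sqrt (by linarith [hρ.2] : (0:ℝ) ≤ 1 - ρ)]
    ring
  have hf : Measurable (fun ω : Fin (k+1) → ℝ => (ω 0, ω i₀.succ)) :=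
    (measurable_pi_apply 0).prodMk (measurable_pi_apply i₀.succ)
  have h0succ : (0 : Fin (k+1)) ≠ i₀.succ := (Fin.succ_ne_zero i₀).symm
  have key : ∀ x : ℝ, Fstar ρ μ x < Phi x := by
    intro x
    have hTmeas : MeasurableSet {p : ℝ × ℝ | a * p.1 + b * p.2 ≤ x - μ i₀} :=
      measurableSet_le (by fun_prop) measurable_const
    have hsub : {ω : Fin (k+1) → ℝ | (⨆ i, Xvec ρ μ i ω) ≤ x}
        ⊆ (fun ω : Fin (k+1) → ℝ => (ω 0, ω i₀.succ)) ⁻¹'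
            {p : ℝ × ℝ | a * p.1 + b * p.2 ≤ x - μ i₀} := by
      intro ω hω
      have hbd : Xvec ρ μ i₀ ω ≤ x :=
        le_trans (le_ciSup (f := fun i => Xvec ρ μ i ω) (Set.Finite.bddAbove (Set.finite_range _)) i₀) hω
      simp only [Set.mem_preimage, Set.mem_setOf_eq]
      have := hbd
      unfold Xvec at this
      rw [ha, hb]
      linarith
    have hpremeas : stdGaussianPi (k+1)
        ((fun ω : Fin (k+1) → ℝ => (ω 0, ω i₀.succ)) ⁻¹'
          {p : ℝ × ℝ | a * p.1 + b * p.2 ≤ x - μ i₀})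
        = gaussianReal 0 1 (Set.Iic (x - μ i₀)) := by
      rw [stdGaussianPi, ← Measure.map_apply hf hTmeas, pair_law h0succ,
        gauss_prod_halfplane hab]
    have hmono : stdGaussianPi (k+1) {ω | (⨆ i, Xvec ρ μ i ω) ≤ x}
        ≤ gaussianReal 0 1 (Set.Iic (x - μ i₀)) := by
      rw [← hpremeas]
      exact measure_mono hsub
    have hle : Fstar ρ μ x ≤ Phi (x - μ i₀) := by
      exact ENNReal.toReal_mono (measure_ne_top _ _) hmono
    exact lt_of_le_of_lt hle (Phi_strictMono (by linarith))
  refine ⟨key, ?_⟩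
  rintro ⟨x, hx⟩
  exact absurd hx (ne_of_lt (key x))
end

section
/- Let ρ ∈ (0,1), k ≥ 1, ν_0 ∈ ℝ and ν ∈ ℝ^k, and let G(ν_0, ν) = (1/√ρ) ∫_{−∞}^{∞} φ((t − ν_0)/√ρ) ∏_{j=1}^{k} Φ((t − ν_j)/√(1−ρ)) dt. Then the partial derivative of G with respect to ν_0 exists, is strictly positive, and equals ∂G/∂ν_0(ν_0, ν) = (1/√ρ) ∫_{−∞}^{∞} φ((t − ν_0)/√ρ) · d/dt(∏_{j=1}^{k} Φ((t − ν_j)/√(1−ρ))) dt. -/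
open MeasureTheory ProbabilityTheory Filter
open scoped ENNReal

/-- `G(ν₀, ν) = (1/√ρ) ∫ φ((t-ν₀)/√ρ) ∏_j Φ((t-ν_j)/√(1-ρ)) dt`. -/
noncomputable def Gint (ρ : ℝ) {k : ℕ} (ν0 : ℝ) (ν : Fin k → ℝ) : ℝ :=
  (1 / Real.sqrt ρ) *
    ∫ t : ℝ, phiPDF ((t - ν0) / Real.sqrt ρ) * ∏ j, Phi ((t - ν j) / Real.sqrt (1-ρ))

/- Auxiliary lemmas -/

lemma continuous_phiPDF : Continuous phiPDF := by
  unfold phiPDF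
  rw [gaussianPDFReal_def]
  fun_prop

lemma phiPDF_pos (x : ℝ) : 0 < phiPDF x := gaussianPDFReal_pos 0 1 x one_ne_zero

lemma phiPDF_le_one (x : ℝ) : phiPDF x ≤ 1 := by
  unfold phiPDF
  rw [gaussianPDFReal]
  push_cast
  have h1 : Real.exp (-(x - 0) ^ 2 / (2 * 1)) ≤ 1 := by
    rw [Real.exp_le_one_iff]
    nlinarith [sq_nonneg (x - 0)]
  have h2 : (Real.sqrt (2 * Real.pi * 1))⁻¹ ≤ 1 := by
    rw [inv_le_one_iff₀]
    right
    rw [Real.one_le_sqrt]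
    nlinarith [Real.pi_gt_three]
  calc (Real.sqrt (2 * Real.pi * 1))⁻¹ * Real.exp (-(x - 0) ^ 2 / (2 * 1)) ≤ 1 * 1 :=
        mul_le_mul h2 h1 (Real.exp_nonneg _) one_pos.le
    _ = 1 := by ring

lemma Phi_eq_integral (x : ℝ) : Phi x = ∫ t in Set.Iic x, phiPDF t := by
  unfold Phi phiPDF
  rw [gaussianReal_apply_eq_integral 0 one_ne_zero]
  rw [ENNReal.toReal_ofReal]
  exact integral_nonneg fun t => gaussianPDFReal_nonneg 0 1 t

lemma integrable_phiPDF : Integrable phiPDF := integrable_gaussianPDFReal 0 1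

lemma hasDerivAt_Phi (x : ℝ) : HasDerivAt Phi (phiPDF x) x := by
  have key : Phi = fun y => Phi 0 + ∫ t in (0:ℝ)..y, phiPDF t := by
    funext y
    rw [Phi_eq_integral, Phi_eq_integral, ← intervalIntegral.integral_Iic_sub_Iic
      integrable_phiPDF.integrableOn integrable_phiPDF.integrableOn]
    ring
  rw [key]
  exact (intervalIntegral.integral_hasDerivAt_right
    integrable_phiPDF.intervalIntegrable
    continuous_phiPDF.aestronglyMeasurable.stronglyMeasurableAtFilter
    continuous_phiPDF.continuousAt).const_add _

lemma continuous_Phi : Continuous Phi :=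
  continuous_iff_continuousAt.2 fun x => (hasDerivAt_Phi x).continuousAt

lemma Phi_pos (x : ℝ) : 0 < Phi x := by
  unfold Phi
  refine ENNReal.toReal_pos (fun h => ?_) (measure_ne_top _ _)
  have := (gaussianReal_absolutelyContinuous' 0 one_ne_zero) h
  simp [Real.volume_Iic] at this

lemma Phi_nonneg (x : ℝ) : 0 ≤ Phi x := ENNReal.toReal_nonneg

lemma Phi_le_one (x : ℝ) : Phi x ≤ 1 := by
  unfold Phi
  exact ENNReal.toReal_le_of_le_ofReal one_pos.le (by simpa using prob_le_one)

lemma cov_lemma {r : ℝ} (hr : 0 < r) (g : ℝ → ℝ) (v : ℝ) :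
    (1/r) * ∫ t : ℝ, phiPDF ((t - v)/r) * g t = ∫ u : ℝ, phiPDF u * g (v + r * u) := by
  set F : ℝ → ℝ := fun t => phiPDF ((t - v)/r) * g t with hF
  have h1 : (fun u : ℝ => phiPDF u * g (v + r * u)) = fun u => (fun t => F (t + v)) (r * u) := by
    funext u
    simp only [hF]
    rw [show r * u + v - v = r * u by ring, mul_div_cancel_left₀ _ hr.ne']
    ring_nf
  rw [h1, MeasureTheory.Measure.integral_comp_mul_left (fun t => F (t + v)) r,
    MeasureTheory.integral_add_right_eq_self F v, smul_eq_mul,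
    abs_of_pos (inv_pos.2 hr), one_div]

section ProdLemmas

variable {k : ℕ} (c : ℝ) (ν : Fin k → ℝ)

noncomputable def Pder (s : ℝ) : ℝ :=
  ∑ j, (∏ i ∈ Finset.univ.erase j, Phi ((s - ν i)/c)) * (phiPDF ((s - ν j)/c) * (1/c))

lemma hasDerivAt_Pprod (s : ℝ) :
    HasDerivAt (fun s => ∏ j, Phi ((s - ν j)/c)) (Pder c ν s) s := by
  have h : ∀ j ∈ Finset.univ, HasDerivAt (fun s => Phi ((s - ν j)/c))
      (phiPDF ((s - ν j)/c) * (1/c)) s := by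
    intro j _
    exact (hasDerivAt_Phi _).comp s (((hasDerivAt_id s).sub_const (ν j)).div_const c)
  simpa [Pder, smul_eq_mul] using HasDerivAt.fun_finsetProd h

lemma Pder_pos (hc : 0 < c) (hk : 1 ≤ k) (s : ℝ) : 0 < Pder c ν s := by
  have : Nonempty (Fin k) := ⟨⟨0, hk⟩⟩
  refine Finset.sum_pos (fun j _ => ?_) Finset.univ_nonempty
  have h1 : 0 < ∏ i ∈ Finset.univ.erase j, Phi ((s - ν i)/c) :=
    Finset.prod_pos fun i _ => Phi_pos _
  exact mul_pos h1 (mul_pos (phiPDF_pos _) (by positivity))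

lemma Pder_le (hc : 0 < c) (s : ℝ) : Pder c ν s ≤ k * (1/c) := by
  have h : ∀ j ∈ Finset.univ,
      (∏ i ∈ Finset.univ.erase j, Phi ((s - ν i)/c)) * (phiPDF ((s - ν j)/c) * (1/c))
        ≤ 1 * (1 * (1/c)) := by
    intro j _
    have hp : ∏ i ∈ Finset.univ.erase j, Phi ((s - ν i)/c) ≤ 1 :=
      Finset.prod_le_one (fun i _ => Phi_nonneg _) (fun i _ => Phi_le_one _)
    have hpn : 0 ≤ ∏ i ∈ Finset.univ.erase j, Phi ((s - ν i)/c) :=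
      Finset.prod_nonneg fun i _ => Phi_nonneg _
    have hφ : phiPDF ((s - ν j)/c) * (1/c) ≤ 1 * (1/c) :=
      mul_le_mul_of_nonneg_right (phiPDF_le_one _) (by positivity)
    have hφn : 0 ≤ phiPDF ((s - ν j)/c) * (1/c) :=
      mul_nonneg (phiPDF_pos _).le (by positivity)
    exact mul_le_mul hp hφ hφn one_pos.le
  calc Pder c ν s ≤ ∑ _j : Fin k, 1 * (1 * (1/c)) := Finset.sum_le_sum h
    _ = k * (1/c) := by simp [Finset.sum_const, mul_comm]

lemma continuous_Pder : Continuous (Pder c ν) := by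
  apply continuous_finset_sum
  intro j _
  exact ((continuous_finset_prod _ fun i _ =>
    continuous_Phi.comp (by fun_prop)).mul
    ((continuous_phiPDF.comp (by fun_prop)).mul continuous_const))

end ProdLemmas

/-- The partial derivative of `G` in `ν₀` exists, is strictly positive, and equals
`(1/√ρ) ∫ φ((t-ν₀)/√ρ) · d/dt (∏_j Φ((t-ν_j)/√(1-ρ))) dt`. -/
theorem stmt12 (k : ℕ) (hk : 1 ≤ k) (ρ : ℝ) (hρ : ρ ∈ Set.Ioo (0:ℝ) 1)
    (ν0 : ℝ) (ν : Fin k → ℝ) :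
    HasDerivAt (fun v => Gint ρ v ν)
      ((1 / Real.sqrt ρ) *
        ∫ t : ℝ, phiPDF ((t - ν0) / Real.sqrt ρ) *
          deriv (fun s => ∏ j, Phi ((s - ν j) / Real.sqrt (1-ρ))) t) ν0 ∧
    0 < (1 / Real.sqrt ρ) *
        ∫ t : ℝ, phiPDF ((t - ν0) / Real.sqrt ρ) *
          deriv (fun s => ∏ j, Phi ((s - ν j) / Real.sqrt (1-ρ))) t := by
  obtain ⟨hρ0, hρ1⟩ := hρ
  set r := Real.sqrt ρ with hrdef
  set c := Real.sqrt (1-ρ) with hcdef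
  have hr : 0 < r := Real.sqrt_pos.2 hρ0
  have hc : 0 < c := Real.sqrt_pos.2 (by linarith)
  have hPcont : Continuous (fun t : ℝ => ∏ j, Phi ((t - ν j)/c)) :=
    continuous_finset_prod _ fun j _ => continuous_Phi.comp (by fun_prop)
  have hPnonneg : ∀ t : ℝ, 0 ≤ ∏ j, Phi ((t - ν j)/c) :=
    fun t => Finset.prod_nonneg fun j _ => Phi_nonneg _
  have hPle : ∀ t : ℝ, ∏ j, Phi ((t - ν j)/c) ≤ 1 :=
    fun t => Finset.prod_le_one (fun j _ => Phi_nonneg _) (fun j _ => Phi_le_one _)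
  have key := hasDerivAt_integral_of_dominated_loc_of_deriv_le (μ := volume)
    (F := fun v u => phiPDF u * ∏ j, Phi ((v + r * u - ν j)/c))
    (F' := fun v u => phiPDF u * Pder c ν (v + r * u)) (x₀ := ν0)
    (bound := fun u => phiPDF u * (k * (1/c))) (Metric.ball_mem_nhds ν0 one_pos)
    (Eventually.of_forall fun v =>
      (continuous_phiPDF.mul (hPcont.comp (by fun_prop : Continuous fun u : ℝ => v + r * u)) :
        Continuous fun u : ℝ => phiPDF u * ∏ j, Phi ((v + r * u - ν j)/c)).aestronglyMeasurable)
    ((integrable_phiPDF.mono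
      (continuous_phiPDF.mul (hPcont.comp
        (by fun_prop : Continuous fun u : ℝ => ν0 + r * u))).aestronglyMeasurable
      (Filter.Eventually.of_forall fun u => by
        rw [Real.norm_eq_abs, Real.norm_eq_abs, abs_of_nonneg (phiPDF_pos u).le,
          abs_of_nonneg (mul_nonneg (phiPDF_pos u).le (hPnonneg _))]
        calc phiPDF u * ∏ j, Phi ((ν0 + r * u - ν j)/c) ≤ phiPDF u * 1 :=
              mul_le_mul_of_nonneg_left (hPle _) (phiPDF_pos u).le
          _ = phiPDF u := mul_one _)))
    ((continuous_phiPDF.mul ((continuous_Pder c ν).comp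
      (by fun_prop : Continuous fun u : ℝ => ν0 + r * u))).aestronglyMeasurable)
    (Eventually.of_forall fun u => fun v _ => by
      rw [Real.norm_eq_abs,
        abs_of_nonneg (mul_nonneg (phiPDF_pos u).le (Pder_pos c ν hc hk _).le)]
      exact mul_le_mul_of_nonneg_left (Pder_le c ν hc _) (phiPDF_pos u).le)
    (integrable_phiPDF.mul_const _)
    (Eventually.of_forall fun u => fun v _ => by
      have h := ((hasDerivAt_Pprod c ν (v + r * u)).comp v
        ((hasDerivAt_id v).add_const (r * u))).const_mul (phiPDF u)
      simpa using h)
  have hderiv_eq : ∀ t : ℝ, deriv (fun s => ∏ j, Phi ((s - ν j)/c)) t = Pder c ν t :=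
    fun t => (hasDerivAt_Pprod c ν t).deriv
  have hGeq : (fun v => Gint ρ v ν)
      = fun v => ∫ u : ℝ, phiPDF u * ∏ j, Phi ((v + r * u - ν j)/c) := by
    funext v
    exact cov_lemma hr (fun t => ∏ j, Phi ((t - ν j)/c)) v
  have hDval : ((1:ℝ)/r) * (∫ t : ℝ, phiPDF ((t - ν0)/r) *
        deriv (fun s => ∏ j, Phi ((s - ν j)/c)) t)
      = ∫ u : ℝ, phiPDF u * Pder c ν (ν0 + r * u) := by
    have h1 : (fun t : ℝ => phiPDF ((t - ν0)/r) * deriv (fun s => ∏ j, Phi ((s - ν j)/c)) t)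
        = fun t => phiPDF ((t - ν0)/r) * Pder c ν t := by
      funext t; rw [hderiv_eq]
    rw [h1]
    exact cov_lemma hr (Pder c ν) ν0
  have hpos : 0 < ∫ u : ℝ, phiPDF u * Pder c ν (ν0 + r * u) := by
    rw [integral_pos_iff_support_of_nonneg
      (fun u => mul_nonneg (phiPDF_pos u).le (Pder_pos c ν hc hk _).le) key.1]
    have hsupp : Function.support (fun u : ℝ => phiPDF u * Pder c ν (ν0 + r * u)) = Set.univ :=
      Set.eq_univ_of_forall fun u =>
        (mul_pos (phiPDF_pos u) (Pder_pos c ν hc hk _)).ne'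
    rw [hsupp]
    simp [Real.volume_univ]
  constructor
  · rw [hGeq, hDval]
    exact key.2
  · rw [hDval]
    exact hpos
end
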